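/- Let R• be a ℤ_{≤0}-graded cochain complex of vector spaces with differential d₀ such that Hⁱ(R•) = 0 for all i ≠ 0. Let d_ℏ = d₀ + ℏd₁ + ... + ℏⁿdₙ be an ℏ-linear degree +1 map on R•⊗ℂ[ℏ] with d_ℏ² = 0. Then for each k, the natural map H⁰(ℏ^{k+1} R•_ℏ, d_ℏ) → H⁰(ℏ^k R•_ℏ, d_ℏ) is injective with cokernel isomorphic to ℏ^k H⁰(R•, d₀), and Hᵏ(R•_ℏ, d_ℏ) has trivial associated graded in negative degrees. -/

import Mathlib

/- STATEMENT 9 (semicontinuity lemma, polynomial case): let `R•` be a `ℤ_{≤0}`-graded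
complex of `ℂ`-vector spaces (we write `M n` for the component in degree `-n`), with
differential `d₀ : M (n+1) → M n` of degree `+1`, such that `Hⁱ(R•) = 0` for `i ≠ 0`.
Let `d_ℏ = d₀ + ℏd₁ + … + ℏᴺd_N` be an `ℏ`-linear degree `+1` map on
`R•_ℏ = R• ⊗ ℂ[ℏ]` with `d_ℏ² = 0`.  Elements of `R_ℏ` in degree `-n` are encoded as
finitely supported `p : ℕ →₀ M n` (`p = Σ_k ℏᵏ (p k)`), `ℏᵏR_ℏ` being those `p` with
`p j = 0` for `j < k`.  Then for each `k`:
(a) the natural map `H⁰(ℏ^{k+1}R•_ℏ) → H⁰(ℏᵏR•_ℏ)` is injective;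
(b) its cokernel is isomorphic to `ℏᵏ H⁰(R•, d₀)` (stated elementwise: the leading
    coefficient map `p ↦ p k` is onto `M 0`, and `p` represents `0` in the cokernel iff
    `p k` is a `d₀`-boundary);
(c) `F_k Hᵐ/F_{k+1} Hᵐ = 0` for `m < 0` (every `d_ℏ`-cocycle of negative degree lying
    in `ℏᵏR_ℏ` is a `d_ℏ`-coboundary of an element of `ℏᵏR_ℏ` up to `ℏ^{k+1}R_ℏ`). -/

noncomputable section

variable (M : ℕ → Type) [∀ n, AddCommGroup (M n)] [∀ n, Module ℂ (M n)]
variable (N : ℕ) (D : ℕ → ∀ n : ℕ, M (n + 1) →ₗ[ℂ] M n)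

/-- The total differential `d_ℏ = Σ_{j≤N} ℏʲ dⱼ` on polynomials in `ℏ`:
`(d_ℏ p)_k = Σ_j dⱼ (p_{k-j})`. -/
def dh (n : ℕ) : (ℕ →₀ M (n + 1)) →ₗ[ℂ] (ℕ →₀ M n) :=
  Finsupp.lsum ℂ (fun k =>
    ∑ j ∈ Finset.range (N + 1), (Finsupp.lsingle (k + j)) ∘ₗ (D j n))

lemma dh_single (n a : ℕ) (y : M (n+1)) :
    dh M N D n (Finsupp.single a y) =
      ∑ j ∈ Finset.range (N + 1), Finsupp.single (a + j) (D j n y) := by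
  rw [dh, Finsupp.lsum_single, LinearMap.sum_apply]
  simp [Finsupp.lsingle_apply]

lemma dh_apply (n : ℕ) (p : ℕ →₀ M (n+1)) (m : ℕ) :
    dh M N D n p m =
      ∑ a ∈ p.support, ∑ j ∈ Finset.range (N+1),
        (Finsupp.single (a + j) (D j n (p a)) : ℕ →₀ M n) m := by
  rw [dh, Finsupp.lsum_apply, Finsupp.sum, Finsupp.finset_sum_apply]
  refine Finset.sum_congr rfl fun a _ => ?_
  rw [LinearMap.sum_apply, Finsupp.finset_sum_apply]
  simp [Finsupp.lsingle_apply]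

lemma dh_coeff_lt (n k : ℕ) (p : ℕ →₀ M (n+1)) (hp : ∀ j < k, p j = 0)
    (m : ℕ) (hm : m < k) : dh M N D n p m = 0 := by
  rw [dh_apply]
  refine Finset.sum_eq_zero fun a ha => Finset.sum_eq_zero fun j _ => ?_
  have hak : k ≤ a := by
    by_contra h
    exact (Finsupp.mem_support_iff.1 ha) (hp a (not_le.1 h))
  rw [Finsupp.single_apply, if_neg (by omega)]

lemma dh_coeff_k (n k : ℕ) (p : ℕ →₀ M (n+1)) (hp : ∀ j < k, p j = 0) :
    dh M N D n p k = D 0 n (p k) := by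
  rw [dh_apply]
  have : ∀ a ∈ p.support, (∑ j ∈ Finset.range (N+1),
      (Finsupp.single (a + j) (D j n (p a)) : ℕ →₀ M n) k)
      = if a = k then D 0 n (p k) else 0 := by
    intro a ha
    have hak : k ≤ a := by
      by_contra h
      exact (Finsupp.mem_support_iff.1 ha) (hp a (not_le.1 h))
    by_cases hak' : a = k
    · subst hak'
      rw [if_pos rfl]
      rw [Finset.sum_eq_single_of_mem 0 (Finset.mem_range.2 (Nat.succ_pos N))]
      · simp
      · intro j _ hj
        rw [Finsupp.single_apply, if_neg (by omega)]
    · rw [if_neg hak']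
      refine Finset.sum_eq_zero fun j _ => ?_
      rw [Finsupp.single_apply, if_neg (by omega)]
  rw [Finset.sum_congr rfl this, Finset.sum_ite_eq' p.support k]
  by_cases hk : k ∈ p.support
  · rw [if_pos hk]
  · rw [if_neg hk, Finsupp.notMem_support_iff.1 hk, map_zero]

lemma dh_dh (hfin : ∀ j, N < j → ∀ n, D j n = 0)
    (hsq : ∀ (k n : ℕ),
      ∑ i ∈ Finset.range (k + 1), (D i n) ∘ₗ (D (k - i) (n + 1)) = 0)
    (n : ℕ) (q : ℕ →₀ M (n+2)) :
    dh M N D n (dh M N D (n+1) q) = 0 := by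
  induction q using Finsupp.induction_linear with
  | zero => simp
  | add p q hp hq => rw [map_add, map_add, hp, hq, add_zero]
  | single a y =>
    rw [dh_single, map_sum]
    have step : ∀ j ∈ Finset.range (N+1),
        dh M N D n (Finsupp.single (a + j) (D j (n+1) y)) =
        ∑ i ∈ Finset.range (N+1),
          Finsupp.single (a + j + i) (D i n (D j (n+1) y)) := fun j _ => by
      rw [dh_single]
    rw [Finset.sum_congr rfl step]
    -- F j i := single (a+j+i) (D i n (D j (n+1) y))
    set F : ℕ → ℕ → (ℕ →₀ M n) :=
      fun j i => Finsupp.single (a + j + i) (D i n (D j (n+1) y)) with hF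
    have hFj : ∀ j i, N < j → F j i = 0 := by
      intro j i hj; simp [hF, hfin j hj]
    have hFi : ∀ j i, N < i → F j i = 0 := by
      intro j i hi; simp [hF, hfin i hi]
    have ext1 : ∑ j ∈ Finset.range (N+1), ∑ i ∈ Finset.range (N+1), F j i
        = ∑ j ∈ Finset.range (2*N+2), ∑ i ∈ Finset.range (2*N+2 - j), F j i := by
      have hsub : Finset.range (N+1) ⊆ Finset.range (2*N+2) :=
        Finset.range_subset_range.2 (by omega)
      rw [Finset.sum_subset hsub
        (fun j _ hj => Finset.sum_eq_zero fun i _ => hFj j i (by simpa using hj))]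
      refine Finset.sum_congr rfl fun j hj => ?_
      by_cases h : j ≤ N
      · have hsub2 : Finset.range (N+1) ⊆ Finset.range (2*N+2 - j) :=
          Finset.range_subset_range.2 (by omega)
        exact Finset.sum_subset hsub2 (fun i _ hi => hFi j i (by simpa using hi))
      · rw [Finset.sum_eq_zero fun i _ => hFj j i (by omega),
          Finset.sum_eq_zero fun i _ => hFj j i (by omega)]
    rw [ext1, ← Finset.sum_range_diag_flip (2*N+2) (fun j i => F j i)]
    refine Finset.sum_eq_zero fun m _ => ?_
    have hc : ∀ i ∈ Finset.range (m+1), F i (m - i)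
        = Finsupp.single (a + m) (D (m - i) n (D i (n+1) y)) := by
      intro i hi
      simp only [hF]
      congr 1
      simp at hi; omega
    rw [Finset.sum_congr rfl hc, ← Finsupp.single_finset_sum]
    have key : ∑ i ∈ Finset.range (m+1), D (m - i) n (D i (n+1) y) = 0 := by
      have h := LinearMap.congr_fun (hsq m n) y
      simp only [LinearMap.sum_apply, LinearMap.comp_apply, LinearMap.zero_apply] at h
      have e : ∀ j ∈ Finset.range (m+1), D (m - j) n (D j (n+1) y)
          = (fun i => D i n (D (m - i) (n+1) y)) (m + 1 - 1 - j) := by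
        intro j hj
        simp only [Nat.add_sub_cancel]
        have hj' : j < m + 1 := Finset.mem_range.1 hj
        have hmm : m - (m - j) = j := by omega
        rw [hmm]
      rw [Finset.sum_congr rfl e,
        Finset.sum_range_reflect (fun i => D i n (D (m - i) (n+1) y)) (m+1), h]
    rw [key, Finsupp.single_zero]

theorem stmt9
    -- `d₀` has no cohomology in negative degrees:
    (hexact : ∀ (n : ℕ) (x : M (n + 1)), D 0 n x = 0 → ∃ y : M (n + 2), D 0 (n + 1) y = x)
    -- `d_ℏ` is a finite sum `d₀ + ℏd₁ + … + ℏᴺd_N`: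
    (hfin : ∀ j, N < j → ∀ n, D j n = 0)
    -- `d_ℏ² = 0`, componentwise in powers of `ℏ`:
    (hsq : ∀ (k n : ℕ),
      ∑ i ∈ Finset.range (k + 1), (D i n) ∘ₗ (D (k - i) (n + 1)) = 0)
    (k : ℕ) :
    -- (a) injectivity of `H⁰(ℏ^{k+1}R_ℏ) → H⁰(ℏᵏR_ℏ)`:
    ((∀ p : ℕ →₀ M 0, (∀ j < k + 1, p j = 0) →
      (∃ q : ℕ →₀ M 1, (∀ j < k, q j = 0) ∧ dh M N D 0 q = p) →
      (∃ q' : ℕ →₀ M 1, (∀ j < k + 1, q' j = 0) ∧ dh M N D 0 q' = p)))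
    ∧
    -- (b) the cokernel is `ℏᵏ H⁰(R•, d₀)`, via the leading coefficient `p ↦ p k`:
    (∀ x : M 0, ∃ p : ℕ →₀ M 0, (∀ j < k, p j = 0) ∧ p k = x)
    ∧
    (∀ p : ℕ →₀ M 0, (∀ j < k, p j = 0) →
      ((∃ y : M 1, D 0 0 y = p k) ↔
        ∃ (p' : ℕ →₀ M 0) (q : ℕ →₀ M 1),
          (∀ j < k + 1, p' j = 0) ∧ (∀ j < k, q j = 0) ∧ p = p' + dh M N D 0 q))
    ∧
    -- (c) trivial associated graded of the cohomology in negative degrees: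
    (∀ (n : ℕ) (p : ℕ →₀ M (n + 1)), (∀ j < k, p j = 0) → dh M N D n p = 0 →
      ∃ (q : ℕ →₀ M (n + 2)) (p' : ℕ →₀ M (n + 1)),
        (∀ j < k, q j = 0) ∧ (∀ j < k + 1, p' j = 0) ∧
        p = dh M N D (n + 1) q + p') := by
  have hsingle_lt : ∀ (n : ℕ) (y : M n) (j : ℕ), j < k →
      (Finsupp.single k y : ℕ →₀ M n) j = 0 := by
    intro n y j hj
    exact Finsupp.single_eq_of_ne (by omega)
  refine ⟨?_, ?_, ?_, ?_⟩
  · -- (a)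
    rintro p hp ⟨q, hq, hdq⟩
    have h0 : D 0 0 (q k) = 0 := by
      rw [← dh_coeff_k M N D 0 k q hq, hdq, hp k (Nat.lt_succ_self k)]
    obtain ⟨y, hy⟩ := hexact 0 (q k) h0
    refine ⟨q - dh M N D 1 (Finsupp.single k y), ?_, ?_⟩
    · intro j hj
      rw [Finsupp.sub_apply]
      rcases Nat.lt_or_ge j k with hjk | hjk
      · rw [hq j hjk, dh_coeff_lt M N D 1 k _ (hsingle_lt 2 y) j hjk, sub_zero]
      · have hjk' : j = k := by omega
        subst hjk'
        rw [dh_coeff_k M N D 1 j _ (hsingle_lt 2 y), Finsupp.single_eq_same, hy, sub_self]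
    · rw [map_sub, hdq, dh_dh M N D hfin hsq 0, sub_zero]
  · -- (b) surjectivity
    intro x
    exact ⟨Finsupp.single k x, hsingle_lt 0 x, Finsupp.single_eq_same⟩
  · -- (b) kernel
    intro p hp
    constructor
    · rintro ⟨y, hy⟩
      refine ⟨p - dh M N D 0 (Finsupp.single k y), Finsupp.single k y, ?_,
        hsingle_lt 1 y, by abel⟩
      intro j hj
      rw [Finsupp.sub_apply]
      rcases Nat.lt_or_ge j k with hjk | hjk
      · rw [hp j hjk, dh_coeff_lt M N D 0 k _ (hsingle_lt 1 y) j hjk, sub_zero]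
      · have hjk' : j = k := by omega
        subst hjk'
        rw [dh_coeff_k M N D 0 j _ (hsingle_lt 1 y), Finsupp.single_eq_same, hy, sub_self]
    · rintro ⟨p', q, hp', hq, heq⟩
      refine ⟨q k, ?_⟩
      rw [heq, Finsupp.add_apply, hp' k (Nat.lt_succ_self k),
        dh_coeff_k M N D 0 k q hq]
      exact (zero_add _).symm
  · -- (c)
    intro n p hp hz
    have h0 : D 0 n (p k) = 0 := by
      rw [← dh_coeff_k M N D n k p hp, hz, Finsupp.coe_zero, Pi.zero_apply]
    obtain ⟨y, hy⟩ := hexact n (p k) h0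
    refine ⟨Finsupp.single k y, p - dh M N D (n+1) (Finsupp.single k y),
      hsingle_lt (n+2) y, ?_, by abel⟩
    intro j hj
    rw [Finsupp.sub_apply]
    rcases Nat.lt_or_ge j k with hjk | hjk
    · rw [hp j hjk, dh_coeff_lt M N D (n+1) k _ (hsingle_lt (n+2) y) j hjk, sub_zero]
    · have hjk' : j = k := by omega
      subst hjk'
      rw [dh_coeff_k M N D (n+1) j _ (hsingle_lt (n+2) y), Finsupp.single_eq_same, hy,
        sub_self]

end
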